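/- Let W' := {w ∈ W : w⁻¹·α ∈ R⁺ for every α ∈ J₀}. Then for every w ∈ W', the set S_w⁺ is empty if and only if (w·R⁺) ∩ R⁺ = R⁺ ∩ R_{J₀}; the latter equality characterizes the unique maximal element w'₀ of W'. -/

import Mathlib

open scoped RealInnerProductSpace

variable {V : Type*} [NormedAddCommGroup V] [InnerProductSpace ℝ V]

/-- The orthogonal reflection `s_α` in the hyperplane perpendicular to `α`,
`s_α x = x - (2⟪x,α⟫/⟪α,α⟫) • α`, as a linear map. -/
noncomputable def reflMap (α : V) : V →ₗ[ℝ] V where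
  toFun x := x - (2 * ⟪x, α⟫ / ⟪α, α⟫) • α
  map_add' x y := by
    try dsimp only
    rw [inner_add_left,
      show 2 * (⟪x, α⟫ + ⟪y, α⟫) / ⟪α, α⟫
          = 2 * ⟪x, α⟫ / ⟪α, α⟫ + 2 * ⟪y, α⟫ / ⟪α, α⟫ by ring,
      add_smul]
    abel
  map_smul' c x := by
    try dsimp only
    rw [RingHom.id_apply, real_inner_smul_left, smul_sub,
      show 2 * (c * ⟪x, α⟫) / ⟪α, α⟫ = c * (2 * ⟪x, α⟫ / ⟪α, α⟫) by ring,
      mul_smul]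

/-- A finite reduced (crystallographic) root system `R` spanning `V`. -/
structure IsRootSystem (R : Set V) : Prop where
  finite : R.Finite
  zero_not_mem : (0 : V) ∉ R
  span_top : Submodule.span ℝ R = ⊤
  refl_mem : ∀ α ∈ R, ∀ β ∈ R, reflMap α β ∈ R
  reduced : ∀ α ∈ R, ∀ c : ℝ, c • α ∈ R → c = 1 ∨ c = -1
  crystallographic : ∀ α ∈ R, ∀ β ∈ R, ∃ n : ℤ, 2 * ⟪β, α⟫ / ⟪α, α⟫ = (n : ℝ)

/-- The set `R⁺` of positive roots with respect to a base `Δ`: the roots that are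
nonnegative integer combinations of the elements of `Δ`. -/
def posRoots (R Δ : Set V) : Set V :=
  {α ∈ R | α ∈ AddSubmonoid.closure Δ}

/-- `Δ` is a base (system of simple roots) of the root system `R`: a linearly
independent subset of `R` such that every root lies in exactly one of `R⁺`, `-R⁺`. -/
structure IsBase (R Δ : Set V) : Prop where
  subset : Δ ⊆ R
  indep : LinearIndependent ℝ ((↑) : Δ → V)
  pos_xor_neg : ∀ α ∈ R, Xor' (α ∈ posRoots R Δ) (-α ∈ posRoots R Δ)

/-- The subgroup of `GL(V)` generated by the reflections `s_α` for `α ∈ S`.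
For `S = R` this is the Weyl group `W`; for `S = J ⊆ Δ` this is the subgroup `W_J`. -/
def weylGroup (S : Set V) : Subgroup (V ≃ₗ[ℝ] V) :=
  Subgroup.closure {g | ∃ α ∈ S, ∀ x, g x = reflMap α x}

/-- The set `R_J := R ∩ span_ℝ(J)`. -/
def rootsIn (R J : Set V) : Set V :=
  R ∩ (Submodule.span ℝ J : Submodule ℝ V)

/-- `S_w⁺ := {α ∈ Δ : w·α ∈ R⁺ and w·α ∉ R_{J₀}}`. -/
def Spos (R Δ J₀ : Set V) (w : V ≃ₗ[ℝ] V) : Set V :=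
  {α ∈ Δ | w α ∈ posRoots R Δ ∧ w α ∉ rootsIn R J₀}

/-- `S_w⁻ := {α ∈ Δ : w·α ∈ -R⁺ and w·α ∉ R_{J₀}}`. -/
def Sneg (R Δ J₀ : Set V) (w : V ≃ₗ[ℝ] V) : Set V :=
  {α ∈ Δ | -(w α) ∈ posRoots R Δ ∧ w α ∉ rootsIn R J₀}

/-- §9.2, Corollary on the partition of `Δ`, part (2):
for every `w` in `W' = {w ∈ W : w⁻¹·J₀ ⊆ R⁺}` (the set of minimal-length coset
representatives of `W_{J₀}\W`), the set `S_w⁺` is empty if and only if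
`(w·R⁺) ∩ R⁺ = R⁺ ∩ R_{J₀}` (the property characterizing the maximal element `w'₀` of `W'`). -/

private lemma multiset_sum_nonpos {s : Multiset ℝ} (h : ∀ x ∈ s, x ≤ 0) : s.sum ≤ 0 := by
  induction s using Multiset.induction with
  | empty => simp
  | cons a s ih =>
    rw [Multiset.sum_cons]
    have ha := h a (Multiset.mem_cons_self a s)
    have hs := ih (fun x hx => h x (Multiset.mem_cons_of_mem hx))
    linarith

theorem Spos_empty_iff_maximal
    [FiniteDimensional ℝ V] (R Δ J₀ : Set V)
    (hR : IsRootSystem R) (hΔ : IsBase R Δ) (hJ₀ : J₀ ⊆ Δ)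
    (w : V ≃ₗ[ℝ] V) (hw : w ∈ weylGroup R)
    (hw' : ∀ α ∈ J₀, w⁻¹ α ∈ posRoots R Δ) :
    Spos R Δ J₀ w = ∅ ↔ (⇑w '' posRoots R Δ) ∩ posRoots R Δ = posRoots R Δ ∩ rootsIn R J₀ := by
  classical
  have hfinΔ : Δ.Finite := hR.finite.subset hΔ.subset
  haveI : Fintype ↥Δ := hfinΔ.fintype
  have hclos_span : ∀ (S : Set V), ∀ x ∈ AddSubmonoid.closure S, x ∈ Submodule.span ℝ S := by
    intro S x hx
    refine AddSubmonoid.closure_induction (fun y hy => Submodule.subset_span hy)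
      (Submodule.zero_mem _) (fun a c _ _ ha hc => Submodule.add_mem _ ha hc) hx
  have hposneg : ∀ α ∈ R, α ∈ posRoots R Δ ∨ -α ∈ posRoots R Δ := fun α hα =>
    ((hΔ.pos_xor_neg α hα).elim (fun h => Or.inl h.1) (fun h => Or.inr h.1))
  have hspanΔ : Submodule.span ℝ Δ = ⊤ := by
    rw [eq_top_iff, ← hR.span_top, Submodule.span_le]
    intro α hα
    rcases hposneg α hα with h | h
    · exact hclos_span Δ α h.2
    · have := hclos_span Δ (-α) h.2
      simpa using Submodule.neg_mem _ this
  let b : Module.Basis ↥Δ ℝ V := Module.Basis.mk hΔ.indep (by rw [Subtype.range_coe, hspanΔ])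
  have hb : ∀ i : ↥Δ, b i = ↑i := fun i => by simp [b]
  have hcoord_self : ∀ (i j : ↥Δ), b.coord i (↑j : V) = if j = i then 1 else 0 := by
    intro i j
    rw [← hb j, Module.Basis.coord_apply, b.repr_self]
    simp [Finsupp.single_apply]
  have hcoord_nonneg : ∀ x ∈ AddSubmonoid.closure Δ, ∀ i : ↥Δ, 0 ≤ b.coord i x := by
    intro x hx
    refine AddSubmonoid.closure_induction ?_ ?_ ?_ hx
    · intro y hy i
      rw [show y = ((⟨y, hy⟩ : ↥Δ) : V) from rfl, hcoord_self]
      split <;> norm_num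
    · intro i; simp
    · intro a c _ _ ha hc i
      rw [map_add]; exact add_nonneg (ha i) (hc i)
  have hcoord_span : ∀ x ∈ Submodule.span ℝ J₀, ∀ i : ↥Δ, (↑i : V) ∉ J₀ → b.coord i x = 0 := by
    intro x hx
    refine Submodule.span_induction ?_ ?_ ?_ ?_ hx
    · intro y hy i hi
      rw [show y = ((⟨y, hJ₀ hy⟩ : ↥Δ) : V) from rfl, hcoord_self]
      have : (⟨y, hJ₀ hy⟩ : ↥Δ) ≠ i := by
        intro hc
        exact hi (hc ▸ hy)
      simp [this]
    · intro i _; simp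
    · intro a c _ _ ha hc i hi
      rw [map_add, ha i hi, hc i hi, add_zero]
    · intro r a _ ha i hi
      rw [map_smul, ha i hi, smul_zero]
  have hmem_span : ∀ x : V, (∀ i : ↥Δ, (↑i : V) ∉ J₀ → b.coord i x = 0) →
      x ∈ Submodule.span ℝ J₀ := by
    intro x hx
    rw [← b.sum_repr x]
    refine Submodule.sum_mem _ ?_
    intro i _
    by_cases hi : (↑i : V) ∈ J₀
    · exact Submodule.smul_mem _ _ (Submodule.subset_span (by rw [hb]; exact hi))
    · have h0 : b.repr x i = 0 := by rw [← Module.Basis.coord_apply]; exact hx i hi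
      rw [h0, zero_smul]; exact Submodule.zero_mem _
  have hW : ∀ g ∈ weylGroup R, ∀ α ∈ R, g α ∈ R := by
    have key : ∀ g ∈ weylGroup R, (⇑g '' R) ⊆ R := by
      intro g hg
      refine Subgroup.closure_induction ?_ ?_ ?_ ?_ hg
      · rintro x ⟨α, hα, hx⟩ v ⟨β, hβ, rfl⟩
        rw [hx]; exact hR.refl_mem α hα β hβ
      · rintro v ⟨β, hβ, rfl⟩; simpa using hβ
      · rintro x y hx hy hx' hy' v ⟨β, hβ, rfl⟩
        have : (x * y) β = x (y β) := rfl
        rw [this]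
        exact hx' ⟨y β, hy' ⟨β, hβ, rfl⟩, rfl⟩
      · intro x hx hx'
        have heq : ⇑x '' R = R := Set.eq_of_subset_of_ncard_le hx'
          (by rw [Set.ncard_image_of_injective _ x.injective]) hR.finite
        rintro v ⟨β, hβ, rfl⟩
        rw [← heq] at hβ
        obtain ⟨u, hu, rfl⟩ := hβ
        have hxu : x⁻¹ (x u) = u := x.symm_apply_apply u
        rw [hxu]; exact hu
    intro g hg α hα
    exact key g hg ⟨α, hα, rfl⟩
  have hclosJ : ∀ x ∈ AddSubmonoid.closure Δ, x ∈ Submodule.span ℝ J₀ →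
      x ∈ AddSubmonoid.closure J₀ := by
    intro x hx hxs
    obtain ⟨l, hl, rfl⟩ := AddSubmonoid.exists_multiset_of_mem_closure hx
    refine AddSubmonoid.multiset_sum_mem _ _ ?_
    intro y hy
    refine AddSubmonoid.subset_closure ?_
    by_contra hyJ
    have hyΔ := hl y hy
    have h0 : b.coord ⟨y, hyΔ⟩ l.sum = 0 := hcoord_span _ hxs ⟨y, hyΔ⟩ hyJ
    obtain ⟨l', rfl⟩ := Multiset.exists_cons_of_mem hy
    rw [Multiset.sum_cons, map_add] at h0
    have h1 : b.coord ⟨y, hyΔ⟩ y = 1 := by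
      simpa using hcoord_self ⟨y, hyΔ⟩ ⟨y, hyΔ⟩
    have h2 : 0 ≤ b.coord ⟨y, hyΔ⟩ l'.sum :=
      hcoord_nonneg _ (AddSubmonoid.multiset_sum_mem _ _
        (fun z hz => AddSubmonoid.subset_closure (hl z (Multiset.mem_cons_of_mem hz)))) _
    rw [h1] at h0
    linarith
  constructor
  · intro h
    have hS : ∀ α ∈ Δ, w α ∈ posRoots R Δ → w α ∈ rootsIn R J₀ := by
      intro α hα hpos
      by_contra hneg
      have : α ∈ Spos R Δ J₀ w := ⟨hα, hpos, hneg⟩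
      rw [h] at this
      exact this
    apply Set.Subset.antisymm
    · rintro β ⟨⟨α, hα, rfl⟩, hβpos⟩
      refine ⟨hβpos, hβpos.1, ?_⟩
      refine hmem_span _ ?_
      intro i hi
      obtain ⟨l, hl, hsum⟩ := AddSubmonoid.exists_multiset_of_mem_closure hα.2
      have hnonneg : 0 ≤ b.coord i (w α) := hcoord_nonneg _ hβpos.2 i
      have hdecomp : b.coord i (w α) = (l.map (fun y => b.coord i (w y))).sum := by
        conv_lhs => rw [← hsum]
        rw [map_multiset_sum, map_multiset_sum, Multiset.map_map]
        rfl
      have hnonpos : b.coord i (w α) ≤ 0 := by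
        rw [hdecomp]
        refine multiset_sum_nonpos ?_
        intro t ht
        obtain ⟨y, hy, rfl⟩ := Multiset.mem_map.mp ht
        have hyΔ := hl y hy
        have hyR : w y ∈ R := hW w hw y (hΔ.subset hyΔ)
        rcases hposneg _ hyR with hp | hn
        · exact le_of_eq (hcoord_span _ (hS y hyΔ hp).2 i hi)
        · have h2 : 0 ≤ b.coord i (-(w y)) := hcoord_nonneg _ hn.2 i
          rw [map_neg] at h2; linarith
      linarith
    · rintro β ⟨hβpos, hβR, hβspan⟩
      refine ⟨⟨w⁻¹ β, ?_, ?_⟩, hβpos⟩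
      · refine ⟨hW _ (inv_mem hw) β hβR, ?_⟩
        have hβJ : β ∈ AddSubmonoid.closure J₀ := hclosJ β hβpos.2 hβspan
        refine AddSubmonoid.closure_induction
          (motive := fun x _ => w⁻¹ x ∈ AddSubmonoid.closure Δ)
          (fun y hy => (hw' y hy).2) ?_ ?_ hβJ
        · show w⁻¹ (0 : V) ∈ AddSubmonoid.closure Δ
          rw [map_zero]; exact AddSubmonoid.zero_mem _
        · intro a c _ _ ha hc
          show w⁻¹ (a + c) ∈ AddSubmonoid.closure Δ
          rw [map_add]; exact AddSubmonoid.add_mem _ ha hc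
      · exact w.apply_symm_apply β
  · intro h
    rw [Set.eq_empty_iff_forall_notMem]
    rintro α ⟨hαΔ, hpos, hnot⟩
    have hαpos : α ∈ posRoots R Δ := ⟨hΔ.subset hαΔ, AddSubmonoid.subset_closure hαΔ⟩
    have hmem : w α ∈ (⇑w '' posRoots R Δ) ∩ posRoots R Δ := ⟨⟨α, hαpos, rfl⟩, hpos⟩
    rw [h] at hmem
    exact hnot hmem.2
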